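/- For every s ∈ (0, 1/4) one has (V_0^2 ∘ H_0^2)(s, s + 3/4) = (1/2 − s, 3/4 − s), and for every t ∈ (1/4, 1/2) one has (V_0^2 ∘ H_0^2)(t, t + 1/4) = (1/2 − t, 5/4 − t) (all coordinates taken modulo 1). Consequently V_0^2 ∘ H_0^2 maps the segment {(s, s + 3/4) : s ∈ (0, 1/4)} bijectively onto the segment {(t, t + 1/4) : t ∈ (1/4, 1/2)} and vice versa. -/
import Mathlib

/- 𝕋 = ℝ/ℤ, with d_𝕋 the quotient distance (norm of the difference in AddCircle 1). -/
noncomputable section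

abbrev T1 := AddCircle (1 : ℝ)

/-- The distance d_𝕋(x,y) = min{|x−y|, 1−|x−y|} on 𝕋. -/
noncomputable def dT (x y : T1) : ℝ := ‖x - y‖

/-- Horizontal wedge flow map H_ω^τ(x₁,x₂) = (x₁ + τ·d_𝕋(x₂,ω), x₂). -/
noncomputable def Hmap (ω : T1) (τ : ℝ) (p : T1 × T1) : T1 × T1 :=
  (p.1 + (↑(τ * dT p.2 ω) : T1), p.2)

/-- Vertical wedge flow map V_ω^τ(x₁,x₂) = (x₁, x₂ + τ·d_𝕋(x₁,ω)). -/
noncomputable def Vmap (ω : T1) (τ : ℝ) (p : T1 × T1) : T1 × T1 :=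
  (p.1, p.2 + (↑(τ * dT p.1 ω) : T1))

/-- The segment {(s, s + 3/4) : s ∈ (0, 1/4)} ⊆ 𝕋². -/
def segA : Set (T1 × T1) :=
  {p | ∃ s ∈ Set.Ioo (0 : ℝ) (1/4), p = (((s : ℝ) : T1), ((s + 3/4 : ℝ) : T1))}

/-- The segment {(t, t + 1/4) : t ∈ (1/4, 1/2)} ⊆ 𝕋². -/
def segB : Set (T1 × T1) :=
  {p | ∃ t ∈ Set.Ioo (1/4 : ℝ) (1/2), p = (((t : ℝ) : T1), ((t + 1/4 : ℝ) : T1))}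

lemma normT1 (x : ℝ) : ‖((x : ℝ) : T1)‖ = |x - round x| := by
  rw [AddCircle.norm_eq]; norm_num

lemma round_eq_of (x : ℝ) (n : ℤ) (h1 : (n : ℝ) - 1/2 ≤ x) (h2 : x < (n : ℝ) + 1/2) :
    round x = n := by
  rw [round_eq]
  exact Int.floor_eq_iff.mpr ⟨by linarith, by push_cast; linarith⟩

lemma dT_coe (x : ℝ) (n : ℤ) (h1 : (n : ℝ) - 1/2 ≤ x) (h2 : x < (n : ℝ) + 1/2) :
    dT ((x : ℝ) : T1) 0 = |x - n| := by
  rw [dT, sub_zero, normT1, round_eq_of x n h1 h2]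

lemma coeT1_congr {a b : ℝ} (h : a = b) : ((a : ℝ) : T1) = ((b : ℝ) : T1) := by rw [h]

set_option maxHeartbeats 1000000 in
lemma coeT1_mod {a b : ℝ} (h : a = b + 1) : ((a : ℝ) : T1) = ((b : ℝ) : T1) := by
  rw [h, AddCircle.coe_add, AddCircle.coe_period, add_zero]

lemma coeA (s : ℝ) (hs : s ∈ Set.Ioo (0 : ℝ) (1/4)) :
    (Vmap 0 2 ∘ Hmap 0 2) (((s : ℝ) : T1), ((s + 3/4 : ℝ) : T1)) =
      (((1/2 - s : ℝ) : T1), ((3/4 - s : ℝ) : T1)) := by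
  obtain ⟨h1, h2⟩ := hs
  have d1 : dT ((s + 3/4 : ℝ) : T1) 0 = 1/4 - s := by
    rw [dT_coe (s + 3/4) 1 (by push_cast; linarith) (by push_cast; linarith)]
    rw [abs_of_nonpos (by push_cast; linarith)]; push_cast; ring
  have e1 : ((s : ℝ) : T1) + ((2 * (1/4 - s) : ℝ) : T1) = ((1/2 - s : ℝ) : T1) := by
    rw [← AddCircle.coe_add]; exact coeT1_congr (by ring)
  have hH : Hmap 0 2 (((s : ℝ) : T1), ((s + 3/4 : ℝ) : T1)) =
      (((1/2 - s : ℝ) : T1), ((s + 3/4 : ℝ) : T1)) := by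
    simp only [Hmap, d1, e1]
  have d2 : dT ((1/2 - s : ℝ) : T1) 0 = 1/2 - s := by
    rw [dT_coe (1/2 - s) 0 (by push_cast; linarith) (by push_cast; linarith)]
    rw [abs_of_nonneg (by push_cast; linarith)]; push_cast; ring
  have e2 : ((s + 3/4 : ℝ) : T1) + ((2 * (1/2 - s) : ℝ) : T1) = ((3/4 - s : ℝ) : T1) := by
    rw [← AddCircle.coe_add]; exact coeT1_mod (by ring)
  rw [Function.comp_apply, hH]
  simp only [Vmap, d2, e2]

lemma coeB (t : ℝ) (ht : t ∈ Set.Ioo (1/4 : ℝ) (1/2)) :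
    (Vmap 0 2 ∘ Hmap 0 2) (((t : ℝ) : T1), ((t + 1/4 : ℝ) : T1)) =
      (((1/2 - t : ℝ) : T1), ((5/4 - t : ℝ) : T1)) := by
  obtain ⟨h1, h2⟩ := ht
  have d1 : dT ((t + 1/4 : ℝ) : T1) 0 = 3/4 - t := by
    rw [dT_coe (t + 1/4) 1 (by push_cast; linarith) (by push_cast; linarith)]
    rw [abs_of_nonpos (by push_cast; linarith)]; push_cast; ring
  have e1 : ((t : ℝ) : T1) + ((2 * (3/4 - t) : ℝ) : T1) = ((1/2 - t : ℝ) : T1) := by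
    rw [← AddCircle.coe_add]; exact coeT1_mod (by ring)
  have hH : Hmap 0 2 (((t : ℝ) : T1), ((t + 1/4 : ℝ) : T1)) =
      (((1/2 - t : ℝ) : T1), ((t + 1/4 : ℝ) : T1)) := by
    simp only [Hmap, d1, e1]
  have d2 : dT ((1/2 - t : ℝ) : T1) 0 = 1/2 - t := by
    rw [dT_coe (1/2 - t) 0 (by push_cast; linarith) (by push_cast; linarith)]
    rw [abs_of_nonneg (by push_cast; linarith)]; push_cast; ring
  have e2 : ((t + 1/4 : ℝ) : T1) + ((2 * (1/2 - t) : ℝ) : T1) = ((5/4 - t : ℝ) : T1) := by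
    rw [← AddCircle.coe_add]; exact coeT1_congr (by ring)
  rw [Function.comp_apply, hH]
  simp only [Vmap, d2, e2]

lemma coe_inj {a b : ℝ} (ha : a ∈ Set.Ico (0 : ℝ) 1) (hb : b ∈ Set.Ico (0 : ℝ) 1)
    (h : ((a : ℝ) : T1) = ((b : ℝ) : T1)) : a = b :=
  (AddCircle.coe_eq_coe_iff_of_mem_Ico (a := 0) (p := (1 : ℝ))
    (hp := ⟨zero_lt_one⟩) (by simpa using ha) (by simpa using hb)).mp h

/-- (V_0^2 ∘ H_0^2)(s, s+3/4) = (1/2−s, 3/4−s) for s ∈ (0,1/4) and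
(V_0^2 ∘ H_0^2)(t, t+1/4) = (1/2−t, 5/4−t) for t ∈ (1/4,1/2); consequently V_0^2 ∘ H_0^2
maps each of the two segments bijectively onto the other. -/
theorem wedge_tau2_segments_swap :
    (∀ s ∈ Set.Ioo (0 : ℝ) (1/4),
      (Vmap 0 2 ∘ Hmap 0 2) (((s : ℝ) : T1), ((s + 3/4 : ℝ) : T1)) =
        (((1/2 - s : ℝ) : T1), ((3/4 - s : ℝ) : T1))) ∧
    (∀ t ∈ Set.Ioo (1/4 : ℝ) (1/2),
      (Vmap 0 2 ∘ Hmap 0 2) (((t : ℝ) : T1), ((t + 1/4 : ℝ) : T1)) =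
        (((1/2 - t : ℝ) : T1), ((5/4 - t : ℝ) : T1))) ∧
    Set.BijOn (Vmap 0 2 ∘ Hmap 0 2) segA segB ∧
    Set.BijOn (Vmap 0 2 ∘ Hmap 0 2) segB segA := by
  refine ⟨coeA, coeB, ⟨?_, ?_, ?_⟩, ⟨?_, ?_, ?_⟩⟩
  · rintro p ⟨s, hs, rfl⟩
    refine ⟨1/2 - s, ⟨by linarith [hs.2], by linarith [hs.1]⟩, ?_⟩
    rw [coeA s hs]
    exact Prod.ext rfl (coeT1_congr (by ring))
  · rintro p ⟨s, hs, rfl⟩ q ⟨s', hs', rfl⟩ h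
    rw [coeA s hs, coeA s' hs'] at h
    have h1 := congrArg Prod.fst h
    have : (1/2 - s : ℝ) = 1/2 - s' := coe_inj
      ⟨by linarith [hs.2], by linarith [hs.1]⟩ ⟨by linarith [hs'.2], by linarith [hs'.1]⟩ h1
    have : s = s' := by linarith
    subst this; rfl
  · rintro p ⟨t, ht, rfl⟩
    have hmem : (1/2 - t : ℝ) ∈ Set.Ioo (0 : ℝ) (1/4) :=
      ⟨by linarith [ht.2], by linarith [ht.1]⟩
    refine ⟨(((1/2 - t : ℝ) : T1), ((1/2 - t + 3/4 : ℝ) : T1)), ⟨1/2 - t, hmem, rfl⟩, ?_⟩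
    rw [coeA (1/2 - t) hmem]
    exact Prod.ext (coeT1_congr (by ring)) (coeT1_congr (by ring))
  · rintro p ⟨t, ht, rfl⟩
    refine ⟨1/2 - t, ⟨by linarith [ht.2], by linarith [ht.1]⟩, ?_⟩
    rw [coeB t ht]
    exact Prod.ext rfl (coeT1_congr (by ring))
  · rintro p ⟨t, ht, rfl⟩ q ⟨t', ht', rfl⟩ h
    rw [coeB t ht, coeB t' ht'] at h
    have h1 := congrArg Prod.fst h
    have : (1/2 - t : ℝ) = 1/2 - t' := coe_inj
      ⟨by linarith [ht.2], by linarith [ht.1]⟩ ⟨by linarith [ht'.2], by linarith [ht'.1]⟩ h1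
    have : t = t' := by linarith
    subst this; rfl
  · rintro p ⟨s, hs, rfl⟩
    have hmem : (1/2 - s : ℝ) ∈ Set.Ioo (1/4 : ℝ) (1/2) :=
      ⟨by linarith [hs.2], by linarith [hs.1]⟩
    refine ⟨(((1/2 - s : ℝ) : T1), ((1/2 - s + 1/4 : ℝ) : T1)), ⟨1/2 - s, hmem, rfl⟩, ?_⟩
    rw [coeB (1/2 - s) hmem]
    exact Prod.ext (coeT1_congr (by ring)) (coeT1_congr (by ring))
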